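/- Let D be a strongly connected digraph on n ≥ 2 vertices such that for every pair of non-adjacent vertices x, y that have a common out-neighbour or a common in-neighbour, one has min{d⁺(x)+d⁻(y), d⁻(x)+d⁺(y)} ≥ n−1 and d(x)+d(y) ≥ 2n−1. Suppose D is not Hamiltonian, and let C := x₁x₂…x_m x₁ be a longest cycle of D. Then D contains a C-bypass, i.e., a directed path of length at least two whose two end-vertices lie on C, whose internal vertices do not lie on C, and whose end-vertices are distinct. -/

import Mathlib

variable {V : Type*}

/-- Rotate an index of `Fin m` forward by `k` steps (indices mod `m`). -/
def finRot {m : ℕ} (i : Fin m) (k : ℕ) : Fin m :=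
  ⟨(i.val + k) % m, Nat.mod_lt _ (Nat.lt_of_le_of_lt (Nat.zero_le i.val) i.isLt)⟩

/-- `c : Fin k → V` is a directed cycle of length `k`: distinct vertices with an
arc from each vertex to the next one (cyclically). -/
def IsCycle (A : V → V → Prop) {k : ℕ} (c : Fin k → V) : Prop :=
  Function.Injective c ∧ ∀ i, A (c i) (c (finRot i 1))

/-- Out-degree of `x`. -/
def outDeg [Fintype V] (A : V → V → Prop) [DecidableRel A] (x : V) : ℕ :=
  (Finset.univ.filter fun y => A x y).card

/-- In-degree of `x`. -/
def inDeg [Fintype V] (A : V → V → Prop) [DecidableRel A] (x : V) : ℕ :=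
  (Finset.univ.filter fun y => A y x).card

/-- Degree of `x`. -/
def deg [Fintype V] (A : V → V → Prop) [DecidableRel A] (x : V) : ℕ :=
  outDeg A x + inDeg A x

/-- Out-degree of `x` into the set `S`. -/
def outDegOn (A : V → V → Prop) [DecidableRel A] (x : V) (S : Finset V) : ℕ :=
  (S.filter fun y => A x y).card

/-- In-degree of `x` from the set `S`. -/
def inDegOn (A : V → V → Prop) [DecidableRel A] (x : V) (S : Finset V) : ℕ :=
  (S.filter fun y => A y x).card

/-- Degree of `x` with respect to the set `S`. -/
def degOn (A : V → V → Prop) [DecidableRel A] (x : V) (S : Finset V) : ℕ :=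
  outDegOn A x S + inDegOn A x S

/-- The set of indices of the subpath of a cycle on `Fin m` that goes from
index `β` to index `α` (inclusive), following the orientation of the cycle. -/
def cycSeg {m : ℕ} (β α : Fin m) : Finset (Fin m) :=
  (Finset.range ((α.val + m - β.val) % m + 1)).image (finRot β)

lemma not_nodup_split : ∀ (L : List V), ¬ L.Nodup → ∃ l1 x l2 l3, L = l1 ++ (x : V) :: (l2 ++ x :: l3) := by
  intro L
  induction L with
  | nil => intro h; exact absurd List.nodup_nil h
  | cons a t ih =>
    intro h
    rw [List.nodup_cons] at h
    push_neg at h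
    by_cases ha : a ∈ t
    · obtain ⟨l2, l3, rfl⟩ := List.append_of_mem ha
      exact ⟨[], a, l2, l3, rfl⟩
    · obtain ⟨l1, x, l2, l3, rfl⟩ := ih (h ha)
      exact ⟨a :: l1, x, l2, l3, rfl⟩

lemma dedup_chain' (R : V → V → Prop) (L : List V) (hL : L.Chain' R) :
    ∃ L' : List V, L'.Chain' R ∧ L'.Nodup ∧ L'.head? = L.head? ∧ L'.getLast? = L.getLast? ∧
      (∀ x ∈ L', x ∈ L) := by
  have key : ∀ N (L : List V), L.length = N → L.Chain' R →
      ∃ L' : List V, L'.Chain' R ∧ L'.Nodup ∧ L'.head? = L.head? ∧ L'.getLast? = L.getLast? ∧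
      (∀ x ∈ L', x ∈ L) := by
    intro N
    induction N using Nat.strong_induction_on with
    | _ N ih =>
    intro L hlen hL
    by_cases hnd : L.Nodup
    · exact ⟨L, hL, hnd, rfl, rfl, fun x hx => hx⟩
    · obtain ⟨l1, x, l2, l3, rfl⟩ := not_nodup_split L hnd
      have hc1 : (l1 ++ x :: l3).Chain' R := by
        rw [List.Chain', List.isChain_append] at hL ⊢
        refine ⟨hL.1, ?_, ?_⟩
        · have h2 := hL.2.1
          have : (x :: (l2 ++ x :: l3)) = (x :: l2) ++ (x :: l3) := by simp
          rw [this, List.isChain_append] at h2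
          exact h2.2.1
        · intro a ha b hb
          refine hL.2.2 a ha b ?_
          simpa using hb
      have hshort : (l1 ++ x :: l3).length < N := by
        subst hlen; simp
      obtain ⟨L', h1, h2, h3, h4, h5⟩ := ih _ hshort _ rfl hc1
      refine ⟨L', h1, h2, ?_, ?_, ?_⟩
      · rw [h3]
        cases l1 with
        | nil => simp
        | cons a t => simp
      · rw [h4]
        have e1 : l1 ++ x :: (l2 ++ x :: l3) = (l1 ++ x :: l2) ++ (x :: l3) := by simp
        rw [e1, List.getLast?_append, List.getLast?_append]
        obtain ⟨a, ha⟩ : ∃ a, (x :: l3).getLast? = some a :=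
          ⟨_, List.getLast?_eq_getLast (by simp)⟩
        rw [ha]
        rfl
      · intro y hy
        have := h5 y hy
        simp at this ⊢
        tauto
  exact key L.length L rfl hL

lemma firstHit (A : V → V → Prop) (p : V → Prop) :
    ∀ (l : List V) (w : V), List.Chain' A (w :: l) → p w → (∃ x ∈ l, ¬ p x) →
    ∃ v l1, ¬ p v ∧ (∀ x ∈ l1, p x) ∧ List.Chain' A (w :: l1 ++ [v]) := by
  intro l
  induction l with
  | nil => intro w _ _ h; simp at h
  | cons a t ih =>
    intro w hch hw hex
    rw [List.Chain', List.isChain_cons_cons] at hch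
    by_cases hpa : p a
    · have hex' : ∃ x ∈ t, ¬ p x := by
        obtain ⟨x, hx, hpx⟩ := hex
        rcases List.mem_cons.1 hx with rfl | hx
        · exact absurd hpa hpx
        · exact ⟨x, hx, hpx⟩
      obtain ⟨v, l1, hv, hl1, hchain⟩ := ih a hch.2 hpa hex'
      refine ⟨v, a :: l1, hv, ?_, ?_⟩
      · intro x hx
        rcases List.mem_cons.1 hx with rfl | hx
        · exact hpa
        · exact hl1 x hx
      · refine List.isChain_cons.2 ⟨?_, hchain⟩
        intro y hy
        simp at hy
        subst hy
        exact hch.1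
    · exact ⟨a, [], hpa, by simp, by simp [List.Chain', List.isChain_cons_cons]; exact hch.1⟩

lemma exists_out_path (A : V → V → Prop) (p : V → Prop) (w v : V)
    (hw : p w) (hv : ¬ p v) (h : Relation.TransGen A w v) :
    ∃ u l1, ¬ p u ∧ (∀ x ∈ l1, p x) ∧ List.Chain' A (w :: l1 ++ [u]) := by
  obtain ⟨l, hch, hlast⟩ := List.exists_isChain_cons_of_relationReflTransGen h.to_reflTransGen
  have hch' : List.Chain' A (w :: l) := hch
  apply firstHit A p l w hch' hw
  have hlne : l ≠ [] := by
    rintro rfl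
    simp at hlast
    exact hv (hlast ▸ hw)
  refine ⟨v, ?_, hv⟩
  rw [List.getLast_cons hlne] at hlast
  exact hlast ▸ List.getLast_mem hlne

lemma exists_in_path (A : V → V → Prop) (p : V → Prop) (u w : V)
    (hu : ¬ p u) (hw : p w) (h : Relation.TransGen A u w) :
    ∃ v l1, ¬ p v ∧ (∀ x ∈ l1, p x) ∧ List.Chain' A (v :: l1 ++ [w]) := by
  have h' : Relation.TransGen (flip A) w u := Relation.transGen_swap.2 h
  obtain ⟨v, l1, hv, hl1, hchain⟩ := exists_out_path (flip A) p w u hw hu h'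
  refine ⟨v, l1.reverse, hv, fun x hx => hl1 x (List.mem_reverse.1 hx), ?_⟩
  have : (w :: l1 ++ [v]).reverse = v :: l1.reverse ++ [w] := by simp
  rw [← this, List.Chain', List.isChain_reverse]
  exact hchain

lemma chain'_glue (A : V → V → Prop) (L1 L2 : List V) (w : V)
    (h1 : List.Chain' A (L1 ++ [w])) (h2 : List.Chain' A (w :: L2)) :
    List.Chain' A (L1 ++ (w :: L2)) := by
  rw [List.Chain', List.isChain_append] at h1 ⊢
  exact ⟨h1.1, h2, by
    intro x hx y hy
    simp at hy
    subst hy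
    exact h1.2.2 x hx w (by simp)⟩

lemma mk_bypass {m : ℕ} (A : V → V → Prop) (c : Fin m → V) (hcinj : Function.Injective c)
    (i j : Fin m) (hij : i ≠ j) (l : List V) (hlne : l ≠ [])
    (hoff : ∀ x ∈ l, ∀ k, x ≠ c k)
    (hch : List.Chain' A (c i :: l ++ [c j])) :
    ∃ (s : ℕ) (_ : 3 ≤ s) (u : Fin s → V),
      Function.Injective u ∧
      (∀ i j : Fin s, (j : ℕ) = (i : ℕ) + 1 → A (u i) (u j)) ∧
      (∃ i : Fin m, u ⟨0, by omega⟩ = c i) ∧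
      (∃ i : Fin m, u ⟨s - 1, by omega⟩ = c i) ∧
      u ⟨0, by omega⟩ ≠ u ⟨s - 1, by omega⟩ ∧
      (∀ t : Fin s, 0 < (t : ℕ) → (t : ℕ) < s - 1 → ∀ i : Fin m, u t ≠ c i) := by
  have hch0 := hch
  rw [List.cons_append, List.Chain', List.isChain_cons] at hch0
  obtain ⟨hlink1, hch1⟩ := hch0
  rw [List.isChain_append] at hch1
  obtain ⟨hchl, -, hlink2⟩ := hch1
  obtain ⟨l', hch', hnd', hhd', hlast', hsub'⟩ := dedup_chain' A l hchl
  have hl'ne : l' ≠ [] := by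
    intro h
    rw [h] at hhd'
    cases l with
    | nil => exact hlne rfl
    | cons a t => simp at hhd'
  have hoff' : ∀ x ∈ l', ∀ k, x ≠ c k := fun x hx => hoff x (hsub' x hx)
  have hcij : c i ≠ c j := fun h => hij (hcinj h)
  have hchL : List.Chain' A (c i :: (l' ++ [c j])) := by
    rw [List.Chain', List.isChain_cons]
    constructor
    · intro y hy
      apply hlink1
      rwa [List.head?_append, hhd', ← List.head?_append (l' := [c j])] at hy
    · rw [List.isChain_append]
      refine ⟨hch', List.isChain_singleton _, ?_⟩
      intro x hx y hy
      simp at hy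
      subst hy
      exact hlink2 x (hlast' ▸ hx) (c j) rfl
  have hndL : (c i :: (l' ++ [c j])).Nodup := by
    refine List.nodup_cons.2 ⟨?_, ?_⟩
    · intro h
      rcases List.mem_append.1 h with h | h
      · exact hoff' _ h i rfl
      · simp at h; exact hcij h
    · refine List.Nodup.append hnd' (List.nodup_singleton _) ?_
      intro x hx hx2
      simp at hx2
      exact hoff' x hx j hx2
  have hlen : (c i :: (l' ++ [c j])).length = l'.length + 2 := by simp
  have hs3 : 3 ≤ (c i :: (l' ++ [c j])).length := by
    rw [hlen]
    have : 0 < l'.length := List.length_pos_iff.2 hl'ne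
    omega
  have hinj : Function.Injective (c i :: (l' ++ [c j])).get :=
    List.nodup_iff_injective_get.1 hndL
  have hget0 : ∀ h, (c i :: (l' ++ [c j])).get ⟨0, h⟩ = c i := fun _ => rfl
  have hLne : (c i :: (l' ++ [c j])) ≠ [] := by simp
  have hgetlast : ∀ h, (c i :: (l' ++ [c j])).get
      ⟨(c i :: (l' ++ [c j])).length - 1, h⟩ = c j := by
    intro h
    rw [List.get_eq_getElem, ← List.getLast_eq_getElem hLne]
    simp
  refine ⟨(c i :: (l' ++ [c j])).length, hs3, (c i :: (l' ++ [c j])).get, hinj, ?_, ?_, ?_, ?_, ?_⟩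
  · intro a b hab
    have ha : (a : ℕ) < (c i :: (l' ++ [c j])).length - 1 := by omega
    have harc : A ((c i :: (l' ++ [c j])).get ⟨a, by omega⟩) ((c i :: (l' ++ [c j])).get ⟨a + 1, by omega⟩) :=
      List.isChain_iff_getElem.1 hchL a (by omega)
    have ea : (⟨(a : ℕ), by omega⟩ : Fin (c i :: (l' ++ [c j])).length) = a := Fin.ext rfl
    have eb : (⟨(a : ℕ) + 1, by omega⟩ : Fin (c i :: (l' ++ [c j])).length) = b :=
      Fin.ext hab.symm
    rwa [ea, eb] at harc
  · exact ⟨i, hget0 _⟩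
  · exact ⟨j, hgetlast _⟩
  · rw [hget0, hgetlast]
    exact hcij
  · intro t ht0 ht1 k hk
    have hmem : (c i :: (l' ++ [c j])).get t ∈ (c i :: (l' ++ [c j])) := by
      obtain ⟨tv, htv⟩ := t
      exact List.get_mem _ ⟨tv, htv⟩
    rcases List.mem_cons.1 hmem with h | h
    · have := hinj (h.trans (hget0 (by omega)).symm)
      have := congrArg Fin.val this
      simp only [Fin.val_mk] at this
      omega
    · rcases List.mem_append.1 h with h | h
      · exact hoff' _ h k hk
      · simp at h
        have := hinj (h.trans (hgetlast (by omega)).symm)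
        have := congrArg Fin.val this
        simp at this
        omega

/-- Claim 2. -/
theorem exists_bypass_of_longest_cycle
    [Fintype V] [DecidableEq V] (A : V → V → Prop) [DecidableRel A]
    (hirr : ∀ v : V, ¬ A v v)
    (n : ℕ) (hn : n = Fintype.card V) (h2 : 2 ≤ n)
    (hstrong : ∀ u v : V, u ≠ v → Relation.TransGen A u v)
    (hcond : ∀ x y : V, x ≠ y → ¬ A x y → ¬ A y x →
      (∃ z : V, (A x z ∧ A y z) ∨ (A z x ∧ A z y)) →
      n - 1 ≤ min (outDeg A x + inDeg A y) (inDeg A x + outDeg A y) ∧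
      2 * n - 1 ≤ deg A x + deg A y)
    (hnotham : ¬ ∃ c : Fin n → V, IsCycle A c)
    (m : ℕ) (hm2 : 2 ≤ m) (c : Fin m → V) (hc : IsCycle A c)
    (hlongest : ∀ (k : ℕ) (d : Fin k → V), IsCycle A d → k ≤ m) :
    ∃ (s : ℕ) (_ : 3 ≤ s) (u : Fin s → V),
      Function.Injective u ∧
      (∀ i j : Fin s, (j : ℕ) = (i : ℕ) + 1 → A (u i) (u j)) ∧
      (∃ i : Fin m, u ⟨0, by omega⟩ = c i) ∧
      (∃ i : Fin m, u ⟨s - 1, by omega⟩ = c i) ∧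
      u ⟨0, by omega⟩ ≠ u ⟨s - 1, by omega⟩ ∧
      (∀ t : Fin s, 0 < (t : ℕ) → (t : ℕ) < s - 1 → ∀ i : Fin m, u t ≠ c i) := by
  classical
  by_contra hnb
  have hcinj := hc.1
  set p : V → Prop := fun v => ∀ i : Fin m, v ≠ c i with hp
  have pneg : ∀ v : V, ¬ p v → ∃ i, v = c i := by
    intro v hv
    by_contra hno
    push_neg at hno
    exact hv hno
  -- Tool 1: any off-C path between cycle vertices has equal endpoints
  have tool1 : ∀ (i j : Fin m) (l : List V), l ≠ [] → (∀ x ∈ l, p x) →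
      List.Chain' A (c i :: l ++ [c j]) → i = j := by
    intro i j l h1 h2 h3
    by_contra hij
    exact hnb (mk_bypass A c hcinj i j hij l h1 h2 h3)
  have hm0 : 0 < m := by omega
  have hex : ∃ w, p w := by
    by_contra hno
    push_neg at hno
    have hsurj : Function.Surjective c := by
      intro w
      obtain ⟨i, hi⟩ := pneg w (hno w)
      exact ⟨i, hi.symm⟩
    have hmn : m = n := by
      rw [hn, ← Fintype.card_fin m]
      exact Fintype.card_of_bijective ⟨hcinj, hsurj⟩
    subst hmn
    exact hnotham ⟨c, hc⟩
  -- out-paths and in-paths for off-cycle vertices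
  have hnotp0 : ¬ p (c ⟨0, hm0⟩) := fun h => h ⟨0, hm0⟩ rfl
  have hout : ∀ w, p w → ∃ (i : Fin m) (l1 : List V),
      (∀ x ∈ l1, p x) ∧ List.Chain' A (w :: l1 ++ [c i]) := by
    intro w hw
    obtain ⟨u, l1, hu, hl1, hch⟩ := exists_out_path A p w (c ⟨0, hm0⟩) hw
      hnotp0 (hstrong w (c ⟨0, hm0⟩) (hw _))
    obtain ⟨i, hi⟩ := pneg u hu
    exact ⟨i, l1, hl1, hi ▸ hch⟩
  have hin : ∀ w, p w → ∃ (i : Fin m) (l1 : List V),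
      (∀ x ∈ l1, p x) ∧ List.Chain' A (c i :: l1 ++ [w]) := by
    intro w hw
    obtain ⟨u, l1, hu, hl1, hch⟩ := exists_in_path A p (c ⟨0, hm0⟩) w
      hnotp0 hw (hstrong (c ⟨0, hm0⟩) w (Ne.symm (hw _)))
    obtain ⟨i, hi⟩ := pneg u hu
    exact ⟨i, l1, hl1, hi ▸ hch⟩
  choose fI fL hfP hfC using hout
  choose gI gL hgP hgC using hin
  -- gluing lemmas
  have glue1 : ∀ (w : V) (hw : p w) (k : Fin m) (l : List V), (∀ x ∈ l, p x) →
      List.Chain' A (c k :: l ++ [w]) → k = fI w hw := by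
    intro w hw k l hl hch2
    have hout' : List.Chain' A (w :: (fL w hw ++ [c (fI w hw)])) := by
      have := hfC w hw
      rwa [List.cons_append] at this
    have hglued := chain'_glue A (c k :: l) _ w hch2 hout'
    have e : (c k :: l) ++ (w :: (fL w hw ++ [c (fI w hw)]))
        = c k :: (l ++ w :: fL w hw) ++ [c (fI w hw)] := by simp
    rw [e] at hglued
    refine tool1 k (fI w hw) (l ++ w :: fL w hw) (by simp) ?_ hglued
    intro x hx
    rcases List.mem_append.1 hx with h | h
    · exact hl x h
    · rcases List.mem_cons.1 h with rfl | h
      · exact hw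
      · exact hfP w hw x h
  have glue2 : ∀ (w : V) (hw : p w) (k : Fin m) (l : List V), (∀ x ∈ l, p x) →
      List.Chain' A (w :: l ++ [c k]) → gI w hw = k := by
    intro w hw k l hl hch2
    have hin' : List.Chain' A ((c (gI w hw) :: gL w hw) ++ [w]) := hgC w hw
    have hch2' : List.Chain' A (w :: (l ++ [c k])) := by
      rwa [← List.cons_append]
    have hglued := chain'_glue A (c (gI w hw) :: gL w hw) _ w hin' hch2'
    have e : (c (gI w hw) :: gL w hw) ++ (w :: (l ++ [c k]))
        = c (gI w hw) :: (gL w hw ++ w :: l) ++ [c k] := by simp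
    rw [e] at hglued
    refine tool1 (gI w hw) k (gL w hw ++ w :: l) (by simp) ?_ hglued
    intro x hx
    rcases List.mem_append.1 hx with h | h
    · exact hgP w hw x h
    · rcases List.mem_cons.1 h with rfl | h
      · exact hw
      · exact hl x h
  have hfg : ∀ (w : V) (hw : p w), gI w hw = fI w hw := by
    intro w hw
    exact glue2 w hw (fI w hw) (fL w hw) (hfP w hw) (hfC w hw)
  -- uniform index function
  set F : V → Fin m := fun w => if h : p w then fI w h else ⟨0, hm0⟩ with hF
  have hFval : ∀ (w : V) (hw : p w), F w = fI w hw := by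
    intro w hw
    simp only [hF, dif_pos hw]
  -- adjacency restrictions
  have adjCto : ∀ (w : V) (hw : p w) (k : Fin m), A (c k) w → k = F w := by
    intro w hw k hA
    rw [hFval w hw]
    refine glue1 w hw k [] (by simp) ?_
    exact List.isChain_pair.2 hA
  have adjtoC : ∀ (w : V) (hw : p w) (k : Fin m), A w (c k) → F w = k := by
    intro w hw k hA
    rw [hFval w hw, ← hfg w hw]
    refine glue2 w hw k [] (by simp) ?_
    exact List.isChain_pair.2 hA
  have adjoff : ∀ (w w' : V) (hw : p w) (hw' : p w'), A w w' → F w = F w' := by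
    intro w w' hw hw' hA
    rw [hFval w hw, ← hfg w hw, hFval w' hw']
    have hout' : List.Chain' A (w' :: (fL w' hw' ++ [c (fI w' hw')])) := by
      have := hfC w' hw'
      rwa [List.cons_append] at this
    have harc : List.Chain' A ([w] ++ [w']) := List.isChain_pair.2 hA
    have hglued := chain'_glue A [w] _ w' harc hout'
    have e : [w] ++ (w' :: (fL w' hw' ++ [c (fI w' hw')]))
        = w :: (w' :: fL w' hw') ++ [c (fI w' hw')] := by simp
    rw [e] at hglued
    refine glue2 w hw (fI w' hw') (w' :: fL w' hw') ?_ hglued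
    intro x hx
    rcases List.mem_cons.1 hx with rfl | hx
    · exact hw'
    · exact hfP w' hw' x hx
  -- find y off C with an in-arc from the cycle
  obtain ⟨w0, hw0⟩ := hex
  have hy : ∃ y, p y ∧ ∃ k, A (c k) y := by
    have hch2 := hgC w0 hw0
    cases hgl : gL w0 hw0 with
    | nil =>
      rw [hgl] at hch2
      exact ⟨w0, hw0, gI w0 hw0, List.isChain_pair.1 hch2⟩
    | cons a t =>
      rw [hgl] at hch2
      rw [List.cons_append, List.Chain', List.isChain_cons] at hch2
      refine ⟨a, hgP w0 hw0 a (by rw [hgl]; simp), gI w0 hw0, ?_⟩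
      apply hch2.1
      rw [List.cons_append]
      rfl
  obtain ⟨y, hpy, k, hky⟩ := hy
  have hkF : k = F y := adjCto y hpy k hky
  set j : Fin m := F y with hj
  have hjy : A (c j) y := hkF ▸ hky
  set j' : Fin m := finRot j 1 with hj'
  have hjz : A (c j) (c j') := hc.2 j
  have hjj' : j ≠ j' := by
    have hne : ((j : ℕ) + 1) % m ≠ (j : ℕ) := by
      rcases Nat.lt_or_ge ((j : ℕ) + 1) m with h1 | h1
      · rw [Nat.mod_eq_of_lt h1]; omega
      · have hj1 : (j : ℕ) + 1 = m := by have := j.isLt; omega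
        rw [hj1, Nat.mod_self]
        omega
    intro h
    exact hne (congrArg Fin.val h).symm
  set z : V := c j' with hz
  have hyz : y ≠ z := hpy j'
  have hAyz : ¬ A y z := by
    intro h
    exact hjj' (adjtoC y hpy j' h)
  have hAzy : ¬ A z y := by
    intro h
    exact hjj' ((adjCto y hpy j' h).symm)
  have hdeg : 2 * n - 1 ≤ deg A y + deg A z :=
    (hcond y z hyz hAyz hAzy ⟨c j, Or.inr ⟨hjy, hjz⟩⟩).2
  -- counting
  set S : Finset V := Finset.univ.filter (fun w => p w ∧ F w = j) with hS
  have hmemS : ∀ v : V, v ∈ S ↔ (p v ∧ F v = j) := by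
    intro v
    rw [hS, Finset.mem_filter]
    simp only [Finset.mem_univ, true_and]
  have hyS : y ∈ S := (hmemS y).2 ⟨hpy, rfl⟩
  have hScard : 1 ≤ S.card := Finset.card_pos.2 ⟨y, hyS⟩
  have hdegy : deg A y ≤ 2 * S.card := by
    have hboth : ∀ P : Finset V, (∀ v ∈ P, (A y v ∨ A v y)) → P.card ≤ S.card := by
      intro P hP
      have hsub : P ⊆ insert (c j) (S.erase y) := by
        intro v hv
        rcases hP v hv with hA | hA
        · by_cases hpv : p v
          · have hvy : v ≠ y := by
              rintro rfl
              exact hirr v hA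
            refine Finset.mem_insert.2 (Or.inr (Finset.mem_erase.2 ⟨hvy, ?_⟩))
            exact (hmemS v).2 ⟨hpv, (adjoff y v hpy hpv hA).symm⟩
          · obtain ⟨i, rfl⟩ := pneg v hpv
            have hFi : j = i := adjtoC y hpy i hA
            exact Finset.mem_insert.2 (Or.inl (by rw [hFi]))
        · by_cases hpv : p v
          · have hvy : v ≠ y := by
              rintro rfl
              exact hirr v hA
            refine Finset.mem_insert.2 (Or.inr (Finset.mem_erase.2 ⟨hvy, ?_⟩))
            exact (hmemS v).2 ⟨hpv, adjoff v y hpv hpy hA⟩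
          · obtain ⟨i, rfl⟩ := pneg v hpv
            have hFi : i = j := adjCto y hpy i hA
            exact Finset.mem_insert.2 (Or.inl (by rw [hFi]))
      calc P.card ≤ (insert (c j) (S.erase y)).card := Finset.card_le_card hsub
        _ ≤ (S.erase y).card + 1 := Finset.card_insert_le _ _
        _ = S.card := by rw [Finset.card_erase_of_mem hyS]; omega
    have h1 : outDeg A y ≤ S.card := by
      apply hboth
      intro v hv
      rw [Finset.mem_filter] at hv
      exact Or.inl hv.2
    have h2 : inDeg A y ≤ S.card := by
      apply hboth
      intro v hv
      rw [Finset.mem_filter] at hv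
      exact Or.inr hv.2
    unfold deg
    omega
  set T : Finset V := Finset.univ.filter (fun v => (¬ p v ∧ v ≠ z) ∨ (p v ∧ F v ≠ j)) with hT
  have hmemT : ∀ v : V, v ∈ T ↔ ((¬ p v ∧ v ≠ z) ∨ (p v ∧ F v ≠ j)) := by
    intro v
    rw [hT, Finset.mem_filter]
    simp only [Finset.mem_univ, true_and]
  have hdegz : deg A z ≤ 2 * T.card := by
    have hboth : ∀ P : Finset V, (∀ v ∈ P, (A z v ∨ A v z)) → P.card ≤ T.card := by
      intro P hP
      refine Finset.card_le_card ?_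
      intro v hv
      rw [hmemT]
      have hvz : v ≠ z := by
        intro he
        rcases hP v hv with hA | hA <;> rw [he] at hA <;> exact hirr z hA
      by_cases hpv : p v
      · refine Or.inr ⟨hpv, ?_⟩
        rcases hP v hv with hA | hA
        · have := adjCto v hpv j' hA
          rw [← this]
          exact Ne.symm hjj'
        · have := adjtoC v hpv j' hA
          rw [this]
          exact Ne.symm hjj'
      · exact Or.inl ⟨hpv, hvz⟩
    have h1 : outDeg A z ≤ T.card := by
      apply hboth
      intro v hv
      rw [Finset.mem_filter] at hv
      exact Or.inl hv.2
    have h2 : inDeg A z ≤ T.card := by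
      apply hboth
      intro v hv
      rw [Finset.mem_filter] at hv
      exact Or.inr hv.2
    unfold deg
    omega
  have hST : Disjoint S T := by
    rw [Finset.disjoint_left]
    intro v hvS hvT
    rw [hmemS] at hvS
    rw [hmemT] at hvT
    rcases hvT with ⟨h1, _⟩ | ⟨_, h2⟩
    · exact h1 hvS.1
    · exact h2 hvS.2
  have hpz : ¬ p z := fun h => h j' rfl
  have hzST : z ∉ S ∪ T := by
    intro h
    rcases Finset.mem_union.1 h with h | h
    · exact hpz ((hmemS z).1 h).1
    · rcases (hmemT z).1 h with ⟨_, h2⟩ | ⟨h1, _⟩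
      · exact h2 rfl
      · exact hpz h1
  have hcards : S.card + T.card + 1 ≤ n := by
    have h1 : (insert z (S ∪ T)).card ≤ Fintype.card V := Finset.card_le_univ _
    rw [Finset.card_insert_of_notMem hzST, Finset.card_union_of_disjoint hST] at h1
    omega
  omega
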